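/- Let s, k, ℓ, n, m be integers with s ≥ 0, k ≥ ℓ ≥ s+1, n ≥ k+ℓ and m > ℓ+s. Let ℱ ⊆ {A ∈ C([n], k) : |A ∩ [m]| ≥ s+1} and 𝒢 ⊆ {B ∈ C([n], ℓ) : |B ∩ [m]| ≥ s+1} be cross-intersecting families. Then |ℱ| + |𝒢| ≤ C(n, k) − Σ_{i=0}^{s} C(m, i)·C(n−m, k−i). -/

import Mathlib

open Finset

namespace RUB

variable {i j m n k s : ℕ} {A B : Finset ℕ} {F G : Finset (Finset ℕ)}

lemma compress_eq (hj : j ∈ A) (hi : i ∉ A) :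
    UV.compress {i} {j} A = (A ∪ {i}) \ {j} := by
  rw [UV.compress_of_disjoint_of_le (by simpa using hi) (by simpa using hj)]
  rfl

lemma mem_compress_iff (hj : j ∈ A) (hi : i ∉ A) {x : ℕ} :
    x ∈ UV.compress {i} {j} A ↔ (x ∈ A ∨ x = i) ∧ x ≠ j := by
  rw [compress_eq hj hi]; simp [and_comm]; exact fun _ => or_comm

lemma of_compress_ne (h : UV.compress {i} {j} A ≠ A) : j ∈ A ∧ i ∉ A := by
  unfold UV.compress at h
  split_ifs at h with hc
  · exact ⟨by simpa using hc.2, by simpa using hc.1⟩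
  · exact absurd rfl h

/-- the ambient family -/
def Amb (n k m s : ℕ) : Finset (Finset ℕ) :=
  (powersetCard k (Icc 1 n)).filter (fun A => s + 1 ≤ (A ∩ Icc 1 m).card)

lemma mem_Amb {n k m s : ℕ} :
    A ∈ Amb n k m s ↔ (A ⊆ Icc 1 n ∧ A.card = k) ∧ s + 1 ≤ (A ∩ Icc 1 m).card := by
  simp [Amb, mem_powersetCard]

lemma compress_subset_Icc (hj : j ∈ A) (hi : i ∉ A) (h1 : 0 < i) (hij : i < j)
    (hA : A ⊆ Icc 1 n) : UV.compress {i} {j} A ⊆ Icc 1 n := by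
  intro x hx
  rw [mem_compress_iff hj hi] at hx
  rcases hx.1 with h | h
  · exact hA h
  · subst h
    have := hA hj
    simp only [mem_Icc] at *
    omega

lemma compress_sum_lt (hj : j ∈ A) (hi : i ∉ A) (hij : i < j) :
    ∑ x ∈ UV.compress {i} {j} A, x < ∑ x ∈ A, x := by
  rw [compress_eq hj hi]
  have h1 : (A ∪ {i}) \ {j} = insert i (A.erase j) := by
    ext x
    simp only [mem_sdiff, mem_union, mem_insert, mem_erase, mem_singleton]
    constructor
    · rintro ⟨h | h, hne⟩
      · exact Or.inr ⟨hne, h⟩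
      · exact Or.inl h
    · rintro (rfl | ⟨hne, hx⟩)
      · exact ⟨Or.inr rfl, by omega⟩
      · exact ⟨Or.inl hx, hne⟩
  rw [h1, Finset.sum_insert (by simp [hi])]
  have h2 := Finset.sum_erase_add A id hj
  simp only [id] at h2
  omega

lemma compress_inter_card (hj : j ∈ A) (hi : i ∉ A) (h1 : 0 < i) (hij : i < j) :
    (A ∩ Icc 1 m).card ≤ (UV.compress {i} {j} A ∩ Icc 1 m).card := by
  by_cases hjm : j ≤ m
  · have : UV.compress {i} {j} A ∩ Icc 1 m = ((A ∩ Icc 1 m) ∪ {i}) \ {j} := by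
      ext x
      rw [mem_inter, mem_compress_iff hj hi]
      simp only [mem_sdiff, mem_union, mem_inter, mem_singleton, mem_Icc]
      constructor
      · rintro ⟨⟨h | rfl, hne⟩, hm⟩
        · exact ⟨Or.inl ⟨h, hm⟩, hne⟩
        · exact ⟨Or.inr rfl, hne⟩
      · rintro ⟨h | rfl, hne⟩
        · exact ⟨⟨Or.inl h.1, hne⟩, h.2⟩
        · exact ⟨⟨Or.inr rfl, hne⟩, by omega⟩
    rw [this]
    rw [card_sdiff_of_subset (by simp; right; exact ⟨hj, by omega, hjm⟩)]
    rw [card_union_of_disjoint (by simp [hi])]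
    simp
  · apply card_le_card
    intro x hx
    rw [mem_inter] at hx ⊢
    rw [mem_compress_iff hj hi]
    have : x ≤ m := (mem_Icc.1 hx.2).2
    exact ⟨⟨Or.inl hx.1, by omega⟩, hx.2⟩

lemma compress_mem_Amb (hA : A ∈ Amb n k m s) (h1 : 0 < i) (hij : i < j) :
    UV.compress {i} {j} A ∈ Amb n k m s := by
  by_cases hne : UV.compress {i} {j} A = A
  · rwa [hne]
  · obtain ⟨hj, hi⟩ := of_compress_ne hne
    rw [mem_Amb] at hA ⊢
    refine ⟨⟨compress_subset_Icc hj hi h1 hij hA.1.1, ?_⟩,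
      le_trans hA.2 (compress_inter_card hj hi h1 hij)⟩
    rw [UV.card_compress (by simp) A]
    exact hA.1.2

lemma compression_subset_Amb (hF : F ⊆ Amb n k m s) (h1 : 0 < i) (hij : i < j) :
    UV.compression {i} {j} F ⊆ Amb n k m s := by
  intro a ha
  rcases UV.mem_compression.1 ha with ⟨haF, -⟩ | ⟨-, b, hb, rfl⟩
  · exact hF haF
  · exact compress_mem_Amb (hF hb) h1 hij

/-- cross-intersecting is preserved by simultaneous compression -/
lemma cross_case2 (hcross : ∀ A ∈ F, ∀ B ∈ G, (A ∩ B).Nonempty) (hij : i < j)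
    (hA'F : A ∈ F) (hcA'F : UV.compress {i} {j} A ∈ F)
    (hBG : B ∈ G) (hB'nG : UV.compress {i} {j} B ∉ G) :
    (A ∩ UV.compress {i} {j} B).Nonempty := by
  have hBne : UV.compress {i} {j} B ≠ B := fun h => hB'nG (by rw [h]; exact hBG)
  obtain ⟨hjB, hiB⟩ := of_compress_ne hBne
  by_contra hdis
  have hdisj : ∀ x, x ∈ A → x ∉ UV.compress {i} {j} B := by
    intro x hx hx'
    exact hdis ⟨x, mem_inter.2 ⟨hx, hx'⟩⟩
  have hiB' : i ∈ UV.compress {i} {j} B := by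
    rw [mem_compress_iff hjB hiB]; exact ⟨Or.inr rfl, by omega⟩
  have hiA : i ∉ A := fun h => hdisj i h hiB'
  -- A meets B, so j ∈ A
  obtain ⟨x, hx⟩ := hcross A hA'F B hBG
  rw [mem_inter] at hx
  have hxj : x = j := by
    by_contra hne
    exact hdisj x hx.1 ((mem_compress_iff hjB hiB).2 ⟨Or.inl hx.2, hne⟩)
  rw [hxj] at hx
  have hjA : j ∈ A := hx.1
  -- now compress A is a genuinely moved set in F
  have hcA : UV.compress {i} {j} A = (A ∪ {i}) \ {j} := compress_eq hjA hiA
  obtain ⟨y, hy⟩ := hcross _ hcA'F B hBG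
  rw [mem_inter] at hy
  have hy1 := (mem_compress_iff hjA hiA).1 hy.1
  rcases hy1.1 with hyA | rfl
  · exact hdisj y hyA ((mem_compress_iff hjB hiB).2 ⟨Or.inl hy.2, hy1.2⟩)
  · exact hiB hy.2

lemma cross_compression (hcross : ∀ A ∈ F, ∀ B ∈ G, (A ∩ B).Nonempty) (hij : i < j) :
    ∀ A' ∈ UV.compression {i} {j} F, ∀ B' ∈ UV.compression {i} {j} G,
      (A' ∩ B').Nonempty := by
  intro A' hA' B' hB'
  rcases UV.mem_compression.1 hA' with ⟨hAF, hcAF⟩ | ⟨hAnF, a, haF, rfl⟩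
  · rcases UV.mem_compression.1 hB' with ⟨hBG, -⟩ | ⟨hBnG, b, hbG, rfl⟩
    · exact hcross _ hAF _ hBG
    · by_cases hb : UV.compress {i} {j} b ∈ G
      · exact hcross _ hAF _ hb
      · exact cross_case2 hcross hij hAF hcAF hbG hb
  · rcases UV.mem_compression.1 hB' with ⟨hBG, hcBG⟩ | ⟨hBnG, b, hbG, rfl⟩
    · by_cases ha : UV.compress {i} {j} a ∈ F
      · exact hcross _ ha _ hBG
      · have := cross_case2 (fun B hB A hA => by
            rw [inter_comm]; exact hcross A hA B hB) hij hBG hcBG haF ha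
        rw [inter_comm]
        exact this
    · -- both moved : both contain i
      have hane : UV.compress {i} {j} a ≠ a := by
        intro h; rw [h] at hAnF; · exact hAnF haF
      have hbne : UV.compress {i} {j} b ≠ b := by
        intro h; rw [h] at hBnG; · exact hBnG hbG
      obtain ⟨hja, hia⟩ := of_compress_ne hane
      obtain ⟨hjb, hib⟩ := of_compress_ne hbne
      exact ⟨i, mem_inter.2 ⟨(mem_compress_iff hja hia).2 ⟨Or.inr rfl, by omega⟩,
        (mem_compress_iff hjb hib).2 ⟨Or.inr rfl, by omega⟩⟩⟩


lemma compress_of_not_mem (hj : j ∉ A) : UV.compress {i} {j} A = A := by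
  unfold UV.compress
  rw [if_neg]
  rintro ⟨-, h⟩
  exact hj (by simpa using h)

lemma compression_rep (i j : ℕ) (F : Finset (Finset ℕ)) :
    UV.compression {i} {j} F =
      F.filter (fun a => UV.compress {i} {j} a ∈ F) ∪
        (F.filter (fun a => UV.compress {i} {j} a ∉ F)).image (UV.compress {i} {j}) := by
  unfold UV.compression
  congr 1
  ext x
  simp only [mem_filter, mem_image]
  constructor
  · rintro ⟨⟨b, hbF, rfl⟩, hx⟩
    exact ⟨b, ⟨hbF, hx⟩, rfl⟩
  · rintro ⟨b, ⟨hbF, hcb⟩, rfl⟩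
    exact ⟨⟨b, hbF, rfl⟩, hcb⟩

def famMeasure (F : Finset (Finset ℕ)) : ℕ := ∑ A ∈ F, ∑ x ∈ A, x

lemma compress_sum_le (hij : i < j) (a : Finset ℕ) :
    ∑ x ∈ UV.compress {i} {j} a, x ≤ ∑ x ∈ a, x := by
  by_cases h : UV.compress {i} {j} a = a
  · rw [h]
  · obtain ⟨hja, hia⟩ := of_compress_ne h
    exact (compress_sum_lt hja hia hij).le

lemma sum_compression (i j : ℕ) (F : Finset (Finset ℕ)) :
    famMeasure (UV.compression {i} {j} F) =
      ∑ a ∈ F.filter (fun a => UV.compress {i} {j} a ∈ F), ∑ x ∈ a, x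
        + ∑ a ∈ F.filter (fun a => UV.compress {i} {j} a ∉ F),
            ∑ x ∈ UV.compress {i} {j} a, x := by
  unfold famMeasure
  rw [compression_rep, sum_union, sum_image]
  · intro x hx y hy h
    exact UV.compress_injOn (by simpa using hx) (by simpa using hy) h
  · rw [disjoint_left]
    intro a ha ha'
    obtain ⟨b, hb, rfl⟩ := mem_image.1 ha'
    exact (mem_filter.1 hb).2 (mem_filter.1 ha).1

lemma measure_compression_le (hij : i < j) :
    famMeasure (UV.compression {i} {j} F) ≤ famMeasure F := by
  rw [sum_compression]
  calc _ ≤ ∑ a ∈ F.filter (fun a => UV.compress {i} {j} a ∈ F), ∑ x ∈ a, x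
            + ∑ a ∈ F.filter (fun a => UV.compress {i} {j} a ∉ F), ∑ x ∈ a, x := by
        exact Nat.add_le_add_left (sum_le_sum fun a _ => compress_sum_le hij a) _
    _ = famMeasure F := sum_filter_add_sum_filter_not _ _ _

lemma measure_compression_lt (hij : i < j) (hne : UV.compression {i} {j} F ≠ F) :
    famMeasure (UV.compression {i} {j} F) < famMeasure F := by
  have hmv : (F.filter (fun a => UV.compress {i} {j} a ∉ F)).Nonempty := by
    rw [nonempty_iff_ne_empty]
    intro hemp
    apply hne
    rw [compression_rep, hemp, image_empty, union_empty, filter_eq_self]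
    intro a ha
    by_contra hc
    have : a ∈ F.filter (fun a => UV.compress {i} {j} a ∉ F) := mem_filter.2 ⟨ha, hc⟩
    rw [hemp] at this
    exact notMem_empty _ this
  rw [sum_compression]
  have hstrict : ∑ a ∈ F.filter (fun a => UV.compress {i} {j} a ∉ F),
      ∑ x ∈ UV.compress {i} {j} a, x
      < ∑ a ∈ F.filter (fun a => UV.compress {i} {j} a ∉ F), ∑ x ∈ a, x := by
    apply sum_lt_sum_of_nonempty hmv
    intro a ha
    have := (mem_filter.1 ha).2
    have hane : UV.compress {i} {j} a ≠ a := fun h => this (by rw [h]; exact (mem_filter.1 ha).1)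
    obtain ⟨hja, hia⟩ := of_compress_ne hane
    exact compress_sum_lt hja hia hij
  calc _ < ∑ a ∈ F.filter (fun a => UV.compress {i} {j} a ∈ F), ∑ x ∈ a, x
            + ∑ a ∈ F.filter (fun a => UV.compress {i} {j} a ∉ F), ∑ x ∈ a, x :=
        Nat.add_lt_add_left hstrict _
    _ = famMeasure F := sum_filter_add_sum_filter_not _ _ _



def Shifted (F : Finset (Finset ℕ)) : Prop :=
  ∀ i j : ℕ, 0 < i → i < j → ∀ A ∈ F, UV.compress {i} {j} A ∈ F

lemma exists_shifted (n k l m s : ℕ) :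
    ∀ (N : ℕ) (F G : Finset (Finset ℕ)), famMeasure F + famMeasure G ≤ N →
    F ⊆ Amb n k m s → G ⊆ Amb n l m s →
    (∀ A ∈ F, ∀ B ∈ G, (A ∩ B).Nonempty) →
    ∃ F' G', F'.card = F.card ∧ G'.card = G.card ∧
      F' ⊆ Amb n k m s ∧ G' ⊆ Amb n l m s ∧
      (∀ A ∈ F', ∀ B ∈ G', (A ∩ B).Nonempty) ∧ Shifted F' ∧ Shifted G' := by
  intro N
  induction N using Nat.strong_induction_on with
  | _ N ih =>
    intro F G hN hF hG hcross
    by_cases hcomp : ∀ i ∈ Icc 1 n, ∀ j ∈ Icc 1 n, i < j →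
        UV.compression {i} {j} F = F ∧ UV.compression {i} {j} G = G
    · refine ⟨F, G, rfl, rfl, hF, hG, hcross, ?_, ?_⟩
      all_goals {
        intro i j hi hij A hA
        by_cases hjA : j ∈ A
        · have hsub : A ⊆ Icc 1 n := (mem_Amb.1 (by first | exact hF hA | exact hG hA)).1.1
          have hjn : j ∈ Icc 1 n := hsub hjA
          have hin : i ∈ Icc 1 n := by
            rw [mem_Icc] at hjn ⊢; omega
          have h := (hcomp i hin j hjn hij)
          have := UV.compress_mem_compression (u := {i}) (v := {j}) hA
          first
            | { rw [h.1] at this; exact this }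
            | { rw [h.2] at this; exact this }
        · rw [compress_of_not_mem hjA]; exact hA }
    · push_neg at hcomp
      obtain ⟨i, hi, j, hj, hij, hne⟩ := hcomp
      have hi0 : 0 < i := (mem_Icc.1 hi).1
      have hlt : famMeasure (UV.compression {i} {j} F) + famMeasure (UV.compression {i} {j} G)
          < famMeasure F + famMeasure G := by
        by_cases hFc : UV.compression {i} {j} F = F
        · exact Nat.add_lt_add_of_le_of_lt (measure_compression_le hij)
            (measure_compression_lt hij (hne hFc))
        · exact Nat.add_lt_add_of_lt_of_le (measure_compression_lt hij hFc)
            (measure_compression_le hij)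
      obtain ⟨F', G', h1, h2, h3, h4, h5, h6, h7⟩ :=
        ih _ (lt_of_lt_of_le hlt hN) (UV.compression {i} {j} F) (UV.compression {i} {j} G)
          le_rfl (compression_subset_Amb hF hi0 hij) (compression_subset_Amb hG hi0 hij)
          (cross_compression hcross hij)
      exact ⟨F', G', h1.trans (UV.card_compression _ _ _), h2.trans (UV.card_compression _ _ _),
        h3, h4, h5, h6, h7⟩


lemma subset_Icc_pred (hA : A ⊆ Icc 1 n) (hn : n ∉ A) : A ⊆ Icc 1 (n - 1) := by
  intro x hx
  have h1 := mem_Icc.1 (hA hx)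
  have h2 : x ≠ n := fun h => hn (h ▸ hx)
  rw [mem_Icc]
  omega

lemma cross_links (hn : k + l ≤ n)
    (hF : F ⊆ Amb n k m s) (hG : G ⊆ Amb n l m s)
    (hcross : ∀ A ∈ F, ∀ B ∈ G, (A ∩ B).Nonempty) (hshift : Shifted G) :
    ∀ A ∈ F, n ∈ A → ∀ B ∈ G, n ∈ B → ((A.erase n) ∩ (B.erase n)).Nonempty := by
  intro A hA hnA B hB hnB
  by_contra hdis
  have hdisj : ∀ x, x ∈ A.erase n → x ∉ B.erase n := by
    intro x hx hx'
    exact hdis ⟨x, mem_inter.2 ⟨hx, hx'⟩⟩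
  obtain ⟨⟨hAsub, hAcard⟩, -⟩ := mem_Amb.1 (hF hA)
  obtain ⟨⟨hBsub, hBcard⟩, -⟩ := mem_Amb.1 (hG hB)
  have hn2 : 2 ≤ n := by
    have := hA  -- A nonempty since n ∈ A... just use k+l ≤ n and k,l ≥ 1
    have hk1 : 1 ≤ k := by
      rw [← hAcard]
      exact card_pos.2 ⟨n, hnA⟩
    have hl1 : 1 ≤ l := by
      rw [← hBcard]
      exact card_pos.2 ⟨n, hnB⟩
    omega
  -- find x outside both erased sets
  have hUcard : ((A.erase n) ∪ (B.erase n)).card ≤ k + l - 2 := by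
    have := card_union_le (A.erase n) (B.erase n)
    rw [card_erase_of_mem hnA, card_erase_of_mem hnB, hAcard, hBcard] at this
    have hk1 : 1 ≤ k := by rw [← hAcard]; exact card_pos.2 ⟨n, hnA⟩
    have hl1 : 1 ≤ l := by rw [← hBcard]; exact card_pos.2 ⟨n, hnB⟩
    omega
  have hnotsub : ¬ (Icc 1 (n-1) ⊆ (A.erase n) ∪ (B.erase n)) := by
    intro hsub
    have := card_le_card hsub
    rw [Nat.card_Icc] at this
    omega
  obtain ⟨x, hxI, hxU⟩ := not_subset.1 hnotsub
  have hx1 : 1 ≤ x := (mem_Icc.1 hxI).1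
  have hxn : x < n := by
    have := (mem_Icc.1 hxI).2
    omega
  have hxA : x ∉ A := by
    intro h
    exact hxU (mem_union_left _ (mem_erase.2 ⟨by omega, h⟩))
  have hxB : x ∉ B := by
    intro h
    exact hxU (mem_union_right _ (mem_erase.2 ⟨by omega, h⟩))
  have hcB : UV.compress {x} {n} B ∈ G := hshift x n (by omega) hxn B hB
  obtain ⟨y, hy⟩ := hcross A hA _ hcB
  rw [mem_inter, compress_eq hnB hxB, mem_sdiff, mem_union, mem_singleton, mem_singleton] at hy
  obtain ⟨hyA, hyBx, hyn⟩ := hy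
  rcases hyBx with hyB | rfl
  · exact hdisj y (mem_erase.2 ⟨hyn, hyA⟩) (mem_erase.2 ⟨hyn, hyB⟩)
  · exact hxA hyA

lemma Icc_pred_eq (hn : 1 ≤ n) {x : ℕ} : x ∈ Icc 1 (n-1) ↔ x ∈ Icc 1 n ∧ x ≠ n := by
  simp only [mem_Icc]
  omega

lemma Amb_split (hn : 1 ≤ n) (hk : 1 ≤ k) :
    (Amb n k m s).card = (Amb (n-1) k m s).card +
      ((powersetCard (k-1) (Icc 1 (n-1))).filter
        (fun A => s + 1 ≤ (A ∩ Icc 1 m).card + (if n ≤ m then 1 else 0))).card := by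
  have hsplit : ((Amb n k m s).filter (fun A => n ∈ A)).card
      + ((Amb n k m s).filter (fun A => ¬ n ∈ A)).card = (Amb n k m s).card :=
    card_filter_add_card_filter_not _
  rw [← hsplit]
  have e0 : (Amb n k m s).filter (fun A => ¬ n ∈ A) = Amb (n-1) k m s := by
    ext A
    rw [mem_filter, mem_Amb, mem_Amb]
    constructor
    · rintro ⟨⟨⟨h1, h2⟩, h3⟩, h4⟩
      exact ⟨⟨subset_Icc_pred h1 h4, h2⟩, h3⟩
    · rintro ⟨⟨h1, h2⟩, h3⟩
      have hnA : n ∉ A := by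
        intro h
        have := mem_Icc.1 (h1 h)
        omega
      refine ⟨⟨⟨fun x hx => ?_, h2⟩, h3⟩, hnA⟩
      have := mem_Icc.1 (h1 hx)
      rw [mem_Icc]
      omega
  have e1 : ((Amb n k m s).filter (fun A => n ∈ A)).card =
      ((powersetCard (k-1) (Icc 1 (n-1))).filter
        (fun A => s + 1 ≤ (A ∩ Icc 1 m).card + (if n ≤ m then 1 else 0))).card := by
    refine card_bij' (fun A _ => A.erase n) (fun A _ => insert n A) ?hi ?hj ?li ?ri
    case li =>
      intro A hA
      exact insert_erase (mem_filter.1 hA).2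
    case ri =>
      intro A hA
      apply erase_insert
      intro h
      have := mem_Icc.1 ((mem_powersetCard.1 (mem_filter.1 hA).1).1 h)
      omega
    case hi =>
      intro A hA
      rw [mem_filter] at hA
      obtain ⟨hAm, hnA⟩ := hA
      obtain ⟨⟨h1, h2⟩, h3⟩ := mem_Amb.1 hAm
      rw [mem_filter, mem_powersetCard]
      refine ⟨⟨subset_Icc_pred (fun x hx => h1 (erase_subset _ _ hx)) (notMem_erase _ _), ?_⟩, ?_⟩
      · rw [card_erase_of_mem hnA, h2]
      · by_cases hnm : n ≤ m
        · rw [if_pos hnm]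
          have hmem : n ∈ A ∩ Icc 1 m := mem_inter.2 ⟨hnA, mem_Icc.2 ⟨hn, hnm⟩⟩
          have : A.erase n ∩ Icc 1 m = (A ∩ Icc 1 m).erase n := by
            ext x
            simp only [mem_inter, mem_erase]
            tauto
          rw [this, card_erase_of_mem hmem]
          omega
        · rw [if_neg hnm]
          have : A.erase n ∩ Icc 1 m = A ∩ Icc 1 m := by
            ext x
            simp only [mem_inter, mem_erase, mem_Icc]
            constructor
            · rintro ⟨⟨-, h⟩, h'⟩
              exact ⟨h, h'⟩
            · rintro ⟨h, h'⟩
              exact ⟨⟨by omega, h⟩, h'⟩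
          rw [this]
          omega
    case hj =>
      intro A hA
      rw [mem_filter, mem_powersetCard] at hA
      obtain ⟨⟨h1, h2⟩, h3⟩ := hA
      have hnA : n ∉ A := by
        intro h
        have := mem_Icc.1 (h1 h)
        omega
      rw [mem_filter, mem_Amb]
      refine ⟨⟨⟨?_, ?_⟩, ?_⟩, mem_insert_self _ _⟩
      · intro x hx
        rcases mem_insert.1 hx with rfl | hx'
        · exact mem_Icc.2 ⟨hn, le_rfl⟩
        · have := mem_Icc.1 (h1 hx')
          rw [mem_Icc]
          omega
      · rw [card_insert_of_notMem hnA, h2]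
        omega
      · by_cases hnm : n ≤ m
        · rw [if_pos hnm] at h3
          have : insert n A ∩ Icc 1 m = insert n (A ∩ Icc 1 m) := by
            ext x
            simp only [mem_inter, mem_insert, mem_Icc]
            constructor
            · rintro ⟨rfl | hx, h⟩
              · exact Or.inl rfl
              · exact Or.inr ⟨hx, h⟩
            · rintro (rfl | ⟨hx, h⟩)
              · exact ⟨Or.inl rfl, by omega⟩
              · exact ⟨Or.inr hx, h⟩
          rw [this, card_insert_of_notMem (fun h => hnA (mem_inter.1 h).1)]
          omega
        · rw [if_neg hnm] at h3
          have : insert n A ∩ Icc 1 m = A ∩ Icc 1 m := by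
            ext x
            simp only [mem_inter, mem_insert, mem_Icc]
            constructor
            · rintro ⟨rfl | hx, h⟩
              · omega
              · exact ⟨hx, h⟩
            · rintro ⟨hx, h⟩
              exact ⟨Or.inr hx, h⟩
          rw [this]
          omega
  rw [e0, e1, Nat.add_comm]


lemma base_case (hs : s + 1 ≤ l) (hlk : l ≤ k) (hm : l + s < m) (hnkl : n = k + l)
    (hF : F ⊆ Amb n k m s) (hG : G ⊆ Amb n l m s)
    (hcross : ∀ A ∈ F, ∀ B ∈ G, (A ∩ B).Nonempty) :
    F.card + G.card ≤ (Amb n k m s).card := by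
  classical
  set c : Finset ℕ → Finset ℕ := fun B => Icc 1 n \ B with hc
  have hinj : Set.InjOn c ↑G := by
    intro B hB B' hB' h
    have hBs := (mem_Amb.1 (hG hB)).1.1
    have hBs' := (mem_Amb.1 (hG hB')).1.1
    have h2 : Icc 1 n \ (Icc 1 n \ B) = Icc 1 n \ (Icc 1 n \ B') := congrArg _ h
    rwa [sdiff_sdiff_right_self, sdiff_sdiff_right_self, inf_eq_inter,
      inter_eq_right.2 hBs, inf_eq_inter, inter_eq_right.2 hBs'] at h2
  have hmem : ∀ B ∈ G, c B ∈ Amb n k m s := by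
    intro B hB
    obtain ⟨⟨h1, h2⟩, -⟩ := mem_Amb.1 (hG hB)
    rw [mem_Amb]
    refine ⟨⟨sdiff_subset, ?_⟩, ?_⟩
    · rw [card_sdiff_of_subset h1, Nat.card_Icc, h2]
      omega
    · -- intersection with Icc 1 m
      have he : c B ∩ Icc 1 m = (Icc 1 n ∩ Icc 1 m) \ B := by
        ext x
        simp only [hc, mem_inter, mem_sdiff, mem_Icc]
        tauto
      have hmin : Icc 1 n ∩ Icc 1 m = Icc 1 (min n m) := by
        ext x
        simp only [mem_inter, mem_Icc]
        omega
      rw [he, hmin]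
      have hle : (Icc 1 (min n m)).card - B.card ≤ ((Icc 1 (min n m)) \ B).card :=
        le_card_sdiff _ _
      rw [Nat.card_Icc, h2] at hle
      omega
  have hnotF : ∀ B ∈ G, c B ∉ F := by
    intro B hB hcF
    obtain ⟨x, hx⟩ := hcross _ hcF _ hB
    rw [mem_inter, hc] at hx
    exact (mem_sdiff.1 hx.1).2 hx.2
  have hdisj : Disjoint F (G.image c) := by
    rw [disjoint_right]
    intro a ha haF
    obtain ⟨B, hB, rfl⟩ := mem_image.1 ha
    exact hnotF B hB haF
  have hcard : (G.image c).card = G.card := card_image_of_injOn hinj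
  have hsub : F ∪ G.image c ⊆ Amb n k m s := by
    intro a ha
    rcases mem_union.1 ha with h | h
    · exact hF h
    · obtain ⟨B, hB, rfl⟩ := mem_image.1 h
      exact hmem B hB
  calc F.card + G.card = (F ∪ G.image c).card := by
        rw [card_union_of_disjoint hdisj, hcard]
    _ ≤ (Amb n k m s).card := card_le_card hsub


lemma erase_subset_Icc_pred (hA : A ⊆ Icc 1 n) : A.erase n ⊆ Icc 1 (n - 1) :=
  subset_Icc_pred (fun x hx => hA (erase_subset _ _ hx)) (notMem_erase _ _)

lemma erase_inter_of_gt (hmn : m < n) : A.erase n ∩ Icc 1 m = A ∩ Icc 1 m := by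
  ext x
  simp only [mem_inter, mem_erase, mem_Icc]
  constructor
  · rintro ⟨⟨-, h⟩, h'⟩
    exact ⟨h, h'⟩
  · rintro ⟨h, h'⟩
    exact ⟨⟨by omega, h⟩, h'⟩

lemma erase_inter_card_of_le (hnm : n ≤ m) (hn1 : 1 ≤ n) (hnA : n ∈ A) :
    (A.erase n ∩ Icc 1 m).card + 1 = (A ∩ Icc 1 m).card := by
  have hmem : n ∈ A ∩ Icc 1 m := mem_inter.2 ⟨hnA, mem_Icc.2 ⟨hn1, hnm⟩⟩
  have he : A.erase n ∩ Icc 1 m = (A ∩ Icc 1 m).erase n := by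
    ext x
    simp only [mem_inter, mem_erase]
    tauto
  rw [he, card_erase_of_mem hmem]
  have : 1 ≤ (A ∩ Icc 1 m).card := card_pos.2 ⟨n, hmem⟩
  omega

lemma inter_eq_self_of_le (hA : A ⊆ Icc 1 n) (hnm : n ≤ m) : A ∩ Icc 1 m = A := by
  apply inter_eq_left.2
  intro x hx
  have := mem_Icc.1 (hA hx)
  rw [mem_Icc]
  omega



theorem key : ∀ n : ℕ, ∀ s k l m : ℕ, ∀ F G : Finset (Finset ℕ),
    s + 1 ≤ l → l ≤ k → k + l ≤ n → l + s < m →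
    F ⊆ Amb n k m s → G ⊆ Amb n l m s →
    (∀ A ∈ F, ∀ B ∈ G, (A ∩ B).Nonempty) →
    F.card + G.card ≤ (Amb n k m s).card := by
  intro n
  induction n using Nat.strong_induction_on with
  | _ n ih =>
    intro s k l m F G hs hlk hn hm hF hG hcross
    rcases eq_or_lt_of_le hn with heq | hlt
    · exact base_case hs hlk hm heq.symm hF hG hcross
    -- inductive step : n > k + l
    obtain ⟨F', G', hcF, hcG, hF', hG', hcross', hsF, hsG⟩ :=
      exists_shifted n k l m s (famMeasure F + famMeasure G) F G le_rfl hF hG hcross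
    rw [← hcF, ← hcG]
    have hn1 : 1 ≤ n := by omega
    have hk1 : 1 ≤ k := by omega
    have hl1 : 1 ≤ l := by omega
    -- split the families at n
    have hFsplit : F'.card = (F'.filter (fun A => n ∈ A)).card
        + (F'.filter (fun A => ¬ n ∈ A)).card :=
      (card_filter_add_card_filter_not _).symm
    have hGsplit : G'.card = (G'.filter (fun A => n ∈ A)).card
        + (G'.filter (fun A => ¬ n ∈ A)).card :=
      (card_filter_add_card_filter_not _).symm
    have herase_inj : ∀ (X : Finset (Finset ℕ)),
        ((X.filter (fun A => n ∈ A)).image (fun A => A.erase n)).card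
          = (X.filter (fun A => n ∈ A)).card := by
      intro X
      apply card_image_of_injOn
      intro A hA A' hA' h
      dsimp only at h
      rw [← insert_erase (mem_filter.1 hA).2, h, insert_erase (mem_filter.1 hA').2]
    set F0 := F'.filter (fun A => ¬ n ∈ A) with hF0def
    set G0 := G'.filter (fun A => ¬ n ∈ A) with hG0def
    set F1 := (F'.filter (fun A => n ∈ A)).image (fun A => A.erase n) with hF1def
    set G1 := (G'.filter (fun A => n ∈ A)).image (fun A => A.erase n) with hG1def
    -- bound for the (F0, G0) part
    have hF0sub : F0 ⊆ Amb (n-1) k m s := by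
      intro A hA
      rw [hF0def, mem_filter] at hA
      obtain ⟨⟨h1, h2⟩, h3⟩ := mem_Amb.1 (hF' hA.1)
      exact mem_Amb.2 ⟨⟨subset_Icc_pred h1 hA.2, h2⟩, h3⟩
    have hG0sub : G0 ⊆ Amb (n-1) l m s := by
      intro A hA
      rw [hG0def, mem_filter] at hA
      obtain ⟨⟨h1, h2⟩, h3⟩ := mem_Amb.1 (hG' hA.1)
      exact mem_Amb.2 ⟨⟨subset_Icc_pred h1 hA.2, h2⟩, h3⟩
    have hb0 : F0.card + G0.card ≤ (Amb (n-1) k m s).card :=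
      ih (n-1) (by omega) s k l m F0 G0 hs hlk (by omega) hm hF0sub hG0sub
        (fun A hA B hB => hcross' A (mem_of_mem_filter _ hA) B (mem_of_mem_filter _ hB))
    -- members of F1 / G1
    have hF1mem : ∀ A' ∈ F1, ∃ A, A ∈ F' ∧ n ∈ A ∧ A' = A.erase n := by
      intro A' h
      obtain ⟨A, hA, rfl⟩ := mem_image.1 h
      exact ⟨A, (mem_filter.1 hA).1, (mem_filter.1 hA).2, rfl⟩
    have hG1mem : ∀ B' ∈ G1, ∃ B, B ∈ G' ∧ n ∈ B ∧ B' = B.erase n := by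
      intro B' h
      obtain ⟨B, hB, rfl⟩ := mem_image.1 h
      exact ⟨B, (mem_filter.1 hB).1, (mem_filter.1 hB).2, rfl⟩
    -- cross-intersecting property of the links (uses shiftedness)
    have hcross1 : ∀ A' ∈ F1, ∀ B' ∈ G1, (A' ∩ B').Nonempty := by
      intro A' hA' B' hB'
      obtain ⟨A, hAF, hnA, rfl⟩ := hF1mem A' hA'
      obtain ⟨B, hBG, hnB, rfl⟩ := hG1mem B' hB'
      exact cross_links hn hF' hG' hcross' hsG A hAF hnA B hBG hnB
    -- bound for the (F1, G1) part
    have hb1 : F1.card + G1.card ≤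
        ((powersetCard (k-1) (Icc 1 (n-1))).filter
          (fun A => s + 1 ≤ (A ∩ Icc 1 m).card + (if n ≤ m then 1 else 0))).card := by
      by_cases hnm : n ≤ m
      · rcases Nat.eq_zero_or_pos s with hs0 | hspos
        · -- n ≤ m, s = 0 : the filter is everything
          have hT1full : ((powersetCard (k-1) (Icc 1 (n-1))).filter
              (fun A => s + 1 ≤ (A ∩ Icc 1 m).card + (if n ≤ m then 1 else 0)))
              = powersetCard (k-1) (Icc 1 (n-1)) := by
            apply filter_true_of_mem
            intro A _
            rw [if_pos hnm]
            omega
          rw [hT1full]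
          by_cases hl2 : 2 ≤ l
          · -- apply the induction hypothesis with s' = 0
            have memF : F1 ⊆ Amb (n-1) (k-1) m 0 := by
              intro A' hA'
              obtain ⟨A, hAF, hnA, rfl⟩ := hF1mem _ hA'
              obtain ⟨⟨h1, h2⟩, h3⟩ := mem_Amb.1 (hF' hAF)
              have hsub' : A.erase n ⊆ Icc 1 (n-1) := erase_subset_Icc_pred h1
              refine mem_Amb.2 ⟨⟨hsub', by rw [card_erase_of_mem hnA, h2]⟩, ?_⟩
              rw [inter_eq_self_of_le hsub' (by omega), card_erase_of_mem hnA, h2]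
              omega
            have memG : G1 ⊆ Amb (n-1) (l-1) m 0 := by
              intro B' hB'
              obtain ⟨B, hBG, hnB, rfl⟩ := hG1mem _ hB'
              obtain ⟨⟨h1, h2⟩, h3⟩ := mem_Amb.1 (hG' hBG)
              have hsub' : B.erase n ⊆ Icc 1 (n-1) := erase_subset_Icc_pred h1
              refine mem_Amb.2 ⟨⟨hsub', by rw [card_erase_of_mem hnB, h2]⟩, ?_⟩
              rw [inter_eq_self_of_le hsub' (by omega), card_erase_of_mem hnB, h2]
              omega
            have happ := ih (n-1) (by omega) 0 (k-1) (l-1) m F1 G1 (by omega) (by omega)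
              (by omega) (by omega) memF memG hcross1
            exact le_trans happ (card_le_card (filter_subset _ _))
          · -- l = 1 (and s = 0)
            have hG1sub : G1 ⊆ {∅} := by
              intro B' hB'
              obtain ⟨B, hBG, hnB, rfl⟩ := hG1mem _ hB'
              obtain ⟨⟨h1, h2⟩, -⟩ := mem_Amb.1 (hG' hBG)
              rw [mem_singleton, ← card_eq_zero, card_erase_of_mem hnB, h2]
              omega
            have hpos : 0 < (powersetCard (k-1) (Icc 1 (n-1))).card :=
              card_pos.2 (powersetCard_nonempty.2 (by rw [Nat.card_Icc]; omega))
            by_cases hG1e : G1 = ∅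
            · rw [hG1e]
              simp only [card_empty, Nat.add_zero]
              apply card_le_card
              intro A' hA'
              obtain ⟨A, hAF, hnA, rfl⟩ := hF1mem _ hA'
              obtain ⟨⟨h1, h2⟩, -⟩ := mem_Amb.1 (hF' hAF)
              exact mem_powersetCard.2 ⟨erase_subset_Icc_pred h1,
                by rw [card_erase_of_mem hnA, h2]⟩
            · have hF1e : F1 = ∅ := by
                rw [eq_empty_iff_forall_notMem]
                intro A' hA'
                obtain ⟨B', hB'⟩ := nonempty_iff_ne_empty.2 hG1e
                have hBe : B' = ∅ := mem_singleton.1 (hG1sub hB')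
                obtain ⟨x, hx⟩ := hcross1 A' hA' B' hB'
                rw [hBe] at hx
                simp at hx
              rw [hF1e]
              simp only [card_empty, Nat.zero_add]
              calc G1.card ≤ ({∅} : Finset (Finset ℕ)).card := card_le_card hG1sub
                _ = 1 := rfl
                _ ≤ _ := hpos
        · -- n ≤ m, s ≥ 1
          have hT1 : ((powersetCard (k-1) (Icc 1 (n-1))).filter
              (fun A => s + 1 ≤ (A ∩ Icc 1 m).card + (if n ≤ m then 1 else 0)))
              = Amb (n-1) (k-1) m (s-1) := by
            ext A
            simp only [Amb, mem_filter, mem_powersetCard, if_pos hnm]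
            constructor
            · rintro ⟨h1, h2⟩
              exact ⟨h1, by omega⟩
            · rintro ⟨h1, h2⟩
              exact ⟨h1, by omega⟩
          rw [hT1]
          have memF : F1 ⊆ Amb (n-1) (k-1) m (s-1) := by
            intro A' hA'
            obtain ⟨A, hAF, hnA, rfl⟩ := hF1mem _ hA'
            obtain ⟨⟨h1, h2⟩, h3⟩ := mem_Amb.1 (hF' hAF)
            refine mem_Amb.2 ⟨⟨erase_subset_Icc_pred h1,
              by rw [card_erase_of_mem hnA, h2]⟩, ?_⟩
            have := erase_inter_card_of_le hnm hn1 hnA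
            omega
          have memG : G1 ⊆ Amb (n-1) (l-1) m (s-1) := by
            intro B' hB'
            obtain ⟨B, hBG, hnB, rfl⟩ := hG1mem _ hB'
            obtain ⟨⟨h1, h2⟩, h3⟩ := mem_Amb.1 (hG' hBG)
            refine mem_Amb.2 ⟨⟨erase_subset_Icc_pred h1,
              by rw [card_erase_of_mem hnB, h2]⟩, ?_⟩
            have := erase_inter_card_of_le hnm hn1 hnB
            omega
          exact ih (n-1) (by omega) (s-1) (k-1) (l-1) m F1 G1 (by omega) (by omega)
            (by omega) (by omega) memF memG hcross1
      · -- m < n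
        have hmn : m < n := by omega
        by_cases hsl : s + 2 ≤ l
        · have hT1 : ((powersetCard (k-1) (Icc 1 (n-1))).filter
              (fun A => s + 1 ≤ (A ∩ Icc 1 m).card + (if n ≤ m then 1 else 0)))
              = Amb (n-1) (k-1) m s := by
            ext A
            simp only [Amb, mem_filter, mem_powersetCard, if_neg hnm, Nat.add_zero]
          rw [hT1]
          have memF : F1 ⊆ Amb (n-1) (k-1) m s := by
            intro A' hA'
            obtain ⟨A, hAF, hnA, rfl⟩ := hF1mem _ hA'
            obtain ⟨⟨h1, h2⟩, h3⟩ := mem_Amb.1 (hF' hAF)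
            refine mem_Amb.2 ⟨⟨erase_subset_Icc_pred h1,
              by rw [card_erase_of_mem hnA, h2]⟩, ?_⟩
            rw [erase_inter_of_gt hmn]
            exact h3
          have memG : G1 ⊆ Amb (n-1) (l-1) m s := by
            intro B' hB'
            obtain ⟨B, hBG, hnB, rfl⟩ := hG1mem _ hB'
            obtain ⟨⟨h1, h2⟩, h3⟩ := mem_Amb.1 (hG' hBG)
            refine mem_Amb.2 ⟨⟨erase_subset_Icc_pred h1,
              by rw [card_erase_of_mem hnB, h2]⟩, ?_⟩
            rw [erase_inter_of_gt hmn]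
            exact h3
          exact ih (n-1) (by omega) s (k-1) (l-1) m F1 G1 (by omega) (by omega)
            (by omega) (by omega) memF memG hcross1
        · -- l = s + 1 : G1 is empty
          have hG1e : G1 = ∅ := by
            rw [eq_empty_iff_forall_notMem]
            intro B' hB'
            obtain ⟨B, hBG, hnB, rfl⟩ := hG1mem _ hB'
            obtain ⟨⟨h1, h2⟩, h3⟩ := mem_Amb.1 (hG' hBG)
            have hsub : B ∩ Icc 1 m ⊆ B.erase n := by
              intro x hx
              rw [mem_inter] at hx
              exact mem_erase.2 ⟨by have := mem_Icc.1 hx.2; omega, hx.1⟩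
            have := card_le_card hsub
            rw [card_erase_of_mem hnB, h2] at this
            omega
          rw [hG1e]
          simp only [card_empty, Nat.add_zero]
          apply card_le_card
          intro A' hA'
          obtain ⟨A, hAF, hnA, rfl⟩ := hF1mem _ hA'
          obtain ⟨⟨h1, h2⟩, h3⟩ := mem_Amb.1 (hF' hAF)
          rw [mem_filter, mem_powersetCard]
          refine ⟨⟨erase_subset_Icc_pred h1, by rw [card_erase_of_mem hnA, h2]⟩, ?_⟩
          rw [erase_inter_of_gt hmn]
          omega
    calc F'.card + G'.card
        = (F0.card + G0.card) + (F1.card + G1.card) := by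
          rw [hF1def, hG1def, herase_inj F', herase_inj G']
          omega
      _ ≤ (Amb (n-1) k m s).card + _ := Nat.add_le_add hb0 hb1
      _ = (Amb n k m s).card := (Amb_split hn1 hk1).symm

lemma layer_card (hmn : m ≤ n) (hik : i ≤ k) :
    ((powersetCard k (Icc 1 n)).filter (fun A => (A ∩ Icc 1 m).card = i)).card
      = m.choose i * (n - m).choose (k - i) := by
  have hrhs : m.choose i * (n - m).choose (k - i)
      = ((powersetCard i (Icc 1 m)) ×ˢ (powersetCard (k - i) (Icc (m+1) n))).card := by
    rw [card_product, card_powersetCard, card_powersetCard, Nat.card_Icc, Nat.card_Icc]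
    congr 2 <;> omega
  rw [hrhs]
  apply card_bij' (i := fun A _ => (A ∩ Icc 1 m, A ∩ Icc (m+1) n))
    (j := fun p _ => p.1 ∪ p.2)
  · -- forward membership
    intro A hA
    rw [mem_filter, mem_powersetCard] at hA
    obtain ⟨⟨h1, h2⟩, h3⟩ := hA
    have hcup : (A ∩ Icc 1 m) ∪ (A ∩ Icc (m+1) n) = A := by
      ext x
      simp only [mem_union, mem_inter, mem_Icc]
      constructor
      · rintro (⟨h, -⟩ | ⟨h, -⟩) <;> exact h
      · intro hx
        have := mem_Icc.1 (h1 hx)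
        rcases le_or_gt x m with h | h
        · exact Or.inl ⟨hx, by omega⟩
        · exact Or.inr ⟨hx, by omega⟩
    have hdisj : Disjoint (A ∩ Icc 1 m) (A ∩ Icc (m+1) n) := by
      rw [disjoint_left]
      intro a ha hb
      have h1 := mem_Icc.1 (mem_inter.1 ha).2
      have h2 := mem_Icc.1 (mem_inter.1 hb).2
      omega
    have hcard : (A ∩ Icc 1 m).card + (A ∩ Icc (m+1) n).card = k := by
      rw [← card_union_of_disjoint hdisj, hcup, h2]
    rw [mem_product]
    exact ⟨mem_powersetCard.2 ⟨inter_subset_right, h3⟩,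
      mem_powersetCard.2 ⟨inter_subset_right,
        show (A ∩ Icc (m+1) n).card = k - i by omega⟩⟩
  · -- backward membership
    intro p hp
    rw [mem_product, mem_powersetCard, mem_powersetCard] at hp
    obtain ⟨⟨hP, hPc⟩, ⟨hQ, hQc⟩⟩ := hp
    have hPm : ∀ x ∈ p.1, 1 ≤ x ∧ x ≤ m := fun x hx => mem_Icc.1 (hP hx)
    have hQm : ∀ x ∈ p.2, m + 1 ≤ x ∧ x ≤ n := fun x hx => mem_Icc.1 (hQ hx)
    have hinter : (p.1 ∪ p.2) ∩ Icc 1 m = p.1 := by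
      ext x
      simp only [mem_inter, mem_union, mem_Icc]
      constructor
      · rintro ⟨hx | hx, h⟩
        · exact hx
        · have := hQm x hx; omega
      · intro hx
        exact ⟨Or.inl hx, hPm x hx⟩
    have hdisj : Disjoint p.1 p.2 := by
      rw [disjoint_left]
      intro a ha hb
      have := hPm a ha; have := hQm a hb; omega
    rw [mem_filter, mem_powersetCard, hinter]
    refine ⟨⟨?_, ?_⟩, hPc⟩
    · intro x hx
      rcases mem_union.1 hx with h | h
      · have := hPm x h; rw [mem_Icc]; omega
      · have := hQm x h; rw [mem_Icc]; omega
    · rw [card_union_of_disjoint hdisj, hPc, hQc]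
      omega
  · -- left inverse
    intro A hA
    rw [mem_filter, mem_powersetCard] at hA
    obtain ⟨⟨h1, -⟩, -⟩ := hA
    ext x
    simp only [mem_union, mem_inter, mem_Icc]
    constructor
    · rintro (⟨h, -⟩ | ⟨h, -⟩) <;> exact h
    · intro hx
      have := mem_Icc.1 (h1 hx)
      rcases le_or_gt x m with h | h
      · exact Or.inl ⟨hx, by omega⟩
      · exact Or.inr ⟨hx, by omega⟩
  · -- right inverse
    intro p hp
    rw [mem_product, mem_powersetCard, mem_powersetCard] at hp
    obtain ⟨⟨hP, -⟩, ⟨hQ, -⟩⟩ := hp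
    have hPm : ∀ x ∈ p.1, 1 ≤ x ∧ x ≤ m := fun x hx => mem_Icc.1 (hP hx)
    have hQm : ∀ x ∈ p.2, m + 1 ≤ x ∧ x ≤ n := fun x hx => mem_Icc.1 (hQ hx)
    have e1 : (p.1 ∪ p.2) ∩ Icc 1 m = p.1 := by
      ext x
      simp only [mem_inter, mem_union, mem_Icc]
      constructor
      · rintro ⟨hx | hx, h⟩
        · exact hx
        · have := hQm x hx; omega
      · intro hx
        exact ⟨Or.inl hx, hPm x hx⟩
    have e2 : (p.1 ∪ p.2) ∩ Icc (m+1) n = p.2 := by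
      ext x
      simp only [mem_inter, mem_union, mem_Icc]
      constructor
      · rintro ⟨hx | hx, h⟩
        · have := hPm x hx; omega
        · exact hx
      · intro hx
        exact ⟨Or.inr hx, hQm x hx⟩
    exact Prod.ext e1 e2

lemma Amb_card (hsk : s + 1 ≤ k) :
    (Amb n k m s).card
      = n.choose k - ∑ i ∈ Finset.range (s + 1), m.choose i * (n - m).choose (k - i) := by
  have hfull : (powersetCard k (Icc 1 n)).card = n.choose k := by
    simp [card_powersetCard, Nat.card_Icc]
  by_cases hmn : n ≤ m
  · -- trivial case : restriction is vacuous
    have hA : Amb n k m s = powersetCard k (Icc 1 n) := by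
      apply filter_true_of_mem
      intro A hA
      rw [mem_powersetCard] at hA
      rw [inter_eq_self_of_le hA.1 hmn, hA.2]
      omega
    have hsum : ∑ i ∈ Finset.range (s + 1), m.choose i * (n - m).choose (k - i) = 0 := by
      apply sum_eq_zero
      intro i hi
      rw [mem_range] at hi
      have h1 : n - m = 0 := by omega
      have h2 : 0 < k - i := by omega
      rw [h1, Nat.choose_eq_zero_of_lt h2, Nat.mul_zero]
    rw [hA, hsum, Nat.sub_zero, hfull]
  · -- m < n
    have hmn' : m ≤ n := by omega
    have hneg : (Amb n k m s).card
        + ((powersetCard k (Icc 1 n)).filter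
            (fun A => ¬ s + 1 ≤ (A ∩ Icc 1 m).card)).card
        = n.choose k := by
      rw [← hfull, Amb]
      exact card_filter_add_card_filter_not _
    set bad := (powersetCard k (Icc 1 n)).filter
      (fun A => ¬ s + 1 ≤ (A ∩ Icc 1 m).card) with hbad
    have hbadcard : bad.card
        = ∑ i ∈ Finset.range (s + 1), m.choose i * (n - m).choose (k - i) := by
      have hfib : bad.card = ∑ i ∈ Finset.range (s + 1),
          (bad.filter (fun A => (A ∩ Icc 1 m).card = i)).card := by
        apply card_eq_sum_card_fiberwise
        intro A hA
        rw [hbad, mem_coe, mem_filter] at hA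
        simp only [mem_coe, mem_range]
        omega
      rw [hfib]
      apply sum_congr rfl
      intro i hi
      rw [mem_range] at hi
      have : bad.filter (fun A => (A ∩ Icc 1 m).card = i)
          = (powersetCard k (Icc 1 n)).filter (fun A => (A ∩ Icc 1 m).card = i) := by
        rw [hbad, filter_filter]
        apply filter_congr
        intro A _
        constructor
        · rintro ⟨-, h⟩
          exact h
        · intro h
          exact ⟨by omega, h⟩
      rw [this, layer_card hmn' (by omega)]
    omega


end RUB

open RUB in
theorem restricted_universe_bound_general
    (s k l n m : ℕ) (hs : s + 1 ≤ l) (hlk : l ≤ k) (hn : k + l ≤ n) (hm : l + s < m)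
    (F G : Finset (Finset ℕ))
    (hF : ∀ A ∈ F, A ∈ powersetCard k (Icc 1 n) ∧ s + 1 ≤ (A ∩ Icc 1 m).card)
    (hG : ∀ B ∈ G, B ∈ powersetCard l (Icc 1 n) ∧ s + 1 ≤ (B ∩ Icc 1 m).card)
    (hcross : ∀ A ∈ F, ∀ B ∈ G, (A ∩ B).Nonempty) :
    F.card + G.card ≤
      Nat.choose n k
        - ∑ i ∈ Finset.range (s + 1),
            Nat.choose m i * Nat.choose (n - m) (k - i) := by
  have hF' : F ⊆ Amb n k m s := by
    intro A hA
    rw [Amb, mem_filter]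
    exact hF A hA
  have hG' : G ⊆ Amb n l m s := by
    intro B hB
    rw [Amb, mem_filter]
    exact hG B hB
  calc F.card + G.card ≤ (Amb n k m s).card := key n s k l m F G hs hlk hn hm hF' hG' hcross
    _ = _ := Amb_card (le_trans hs hlk)
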